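/- Under the setup of the function θ (finite alphabets, finite cost c, α = E(P_X,P_Y), S the union of supports of optimal couplings of (P_X,P_Y)): for any pair of probability mass functions (Q_X, Q_Y) and any a > 0, setting β_X := (Q_X − P_X)/a and β_Y := (Q_Y − P_Y)/a, one has (E(Q_X, Q_Y) − α)/a ≥ θ(β_X, β_Y). -/

import Mathlib

open Finset

/-- `p` is a probability mass function on a finite set. -/
def IsPMF {X : Type*} [Fintype X] (p : X → ℝ) : Prop :=
  (∀ x, 0 ≤ p x) ∧ ∑ x, p x = 1

/-- `π` is a coupling of the probability mass functions `pX` and `pY`. -/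
def IsCoupling {X Y : Type*} [Fintype X] [Fintype Y]
    (pX : X → ℝ) (pY : Y → ℝ) (π : X × Y → ℝ) : Prop :=
  IsPMF π ∧ (∀ x, ∑ y, π (x, y) = pX x) ∧ (∀ y, ∑ x, π (x, y) = pY y)

/-- The optimal transport cost between two probability mass functions. -/
noncomputable def OTCost {X Y : Type*} [Fintype X] [Fintype Y]
    (c : X × Y → ℝ) (pX : X → ℝ) (pY : Y → ℝ) : ℝ :=
  sInf {r | ∃ π, IsCoupling pX pY π ∧ r = ∑ z, π z * c z}


section Aux

lemma IsPMF.nonempty {X : Type*} [Fintype X] {p : X → ℝ} (hp : IsPMF p) : Nonempty X := by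
  by_contra h
  rw [not_nonempty_iff] at h
  have := hp.2
  rw [Finset.sum_of_isEmpty] at this
  norm_num at this

lemma prod_coupling {X Y : Type*} [Fintype X] [Fintype Y]
    {pX : X → ℝ} {pY : Y → ℝ} (hpX : IsPMF pX) (hpY : IsPMF pY) :
    IsCoupling pX pY (fun z => pX z.1 * pY z.2) := by
  refine ⟨⟨fun z => mul_nonneg (hpX.1 _) (hpY.1 _), ?_⟩, fun x => ?_, fun y => ?_⟩
  · rw [Fintype.sum_prod_type]
    simp only [← Finset.sum_mul, ← Finset.mul_sum, hpX.2, hpY.2, one_mul]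
  · simp [← Finset.mul_sum, hpY.2]
  · simp [← Finset.sum_mul, hpX.2]

section
variable {X Y : Type*} [Fintype X] [Fintype Y] (c : X × Y → ℝ)

lemma cost_nonneg (hc : ∀ z, 0 ≤ c z) {π : X × Y → ℝ} (hπ : ∀ z, 0 ≤ π z) :
    0 ≤ ∑ z, π z * c z :=
  Finset.sum_nonneg fun z _ => mul_nonneg (hπ z) (hc z)

lemma OTCost_bddBelow (hc : ∀ z, 0 ≤ c z) (pX : X → ℝ) (pY : Y → ℝ) :
    BddBelow {r | ∃ π, IsCoupling pX pY π ∧ r = ∑ z, π z * c z} := by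
  refine ⟨0, fun r hr => ?_⟩
  obtain ⟨π, hπ, rfl⟩ := hr
  exact cost_nonneg c hc hπ.1.1

lemma OTCost_le (hc : ∀ z, 0 ≤ c z) {pX : X → ℝ} {pY : Y → ℝ} {π : X × Y → ℝ}
    (hπ : IsCoupling pX pY π) : OTCost c pX pY ≤ ∑ z, π z * c z :=
  csInf_le (OTCost_bddBelow c hc pX pY) ⟨π, hπ, rfl⟩

/-- marginal swap -/
lemma sum_fst {pX : X → ℝ} {pY : Y → ℝ} {π : X × Y → ℝ}
    (hπ : IsCoupling pX pY π) (φ : X → ℝ) :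
    ∑ z : X × Y, π z * φ z.1 = ∑ x, pX x * φ x := by
  rw [Fintype.sum_prod_type]
  exact Finset.sum_congr rfl fun x _ => by rw [← hπ.2.1 x, Finset.sum_mul]

lemma sum_snd {pX : X → ℝ} {pY : Y → ℝ} {π : X × Y → ℝ}
    (hπ : IsCoupling pX pY π) (ψ : Y → ℝ) :
    ∑ z : X × Y, π z * ψ z.2 = ∑ y, pY y * ψ y := by
  rw [Fintype.sum_prod_type_right]
  exact Finset.sum_congr rfl fun y _ => by rw [← hπ.2.2 y, Finset.sum_mul]

end


section Aux2
variable {X Y : Type*} [Fintype X] [Fintype Y]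

lemma isCompact_couplings (pX : X → ℝ) (pY : Y → ℝ) :
    IsCompact {π : X × Y → ℝ | IsCoupling pX pY π} := by
  apply IsCompact.of_isClosed_subset
    (isCompact_univ_pi (fun _ : X × Y => isCompact_Icc (a := (0:ℝ)) (b := 1)))
  · have h1 : IsClosed {π : X × Y → ℝ | ∀ z, 0 ≤ π z} := by
      rw [Set.setOf_forall]
      exact isClosed_iInter fun z => isClosed_le continuous_const (continuous_apply z)
    have h2 : IsClosed {π : X × Y → ℝ | ∑ z, π z = 1} :=
      isClosed_eq (by continuity) continuous_const
    have h3 : IsClosed {π : X × Y → ℝ | ∀ x, ∑ y, π (x, y) = pX x} := by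
      rw [Set.setOf_forall]
      refine isClosed_iInter fun x => isClosed_eq ?_ continuous_const
      continuity
    have h4 : IsClosed {π : X × Y → ℝ | ∀ y, ∑ x, π (x, y) = pY y} := by
      rw [Set.setOf_forall]
      refine isClosed_iInter fun y => isClosed_eq ?_ continuous_const
      continuity
    have hset : {π : X × Y → ℝ | IsCoupling pX pY π} =
        ({π : X × Y → ℝ | ∀ z, 0 ≤ π z} ∩ {π | ∑ z, π z = 1}) ∩
        ({π : X × Y → ℝ | ∀ x, ∑ y, π (x, y) = pX x} ∩ {π | ∀ y, ∑ x, π (x, y) = pY y}) := by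
      ext π
      simp only [Set.mem_setOf_eq, Set.mem_inter_iff, IsCoupling, IsPMF]
    rw [hset]
    exact (h1.inter h2).inter (h3.inter h4)
  · intro π hπ
    simp only [Set.mem_pi, Set.mem_univ, forall_true_left, Set.mem_Icc]
    intro z
    refine ⟨hπ.1.1 z, ?_⟩
    calc π z ≤ ∑ w, π w := Finset.single_le_sum (fun w _ => hπ.1.1 w) (Finset.mem_univ z)
    _ = 1 := hπ.1.2

lemma exists_optimal_coupling (c : X × Y → ℝ) (hc : ∀ z, 0 ≤ c z)
    {pX : X → ℝ} {pY : Y → ℝ} (hpX : IsPMF pX) (hpY : IsPMF pY) :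
    ∃ π, IsCoupling pX pY π ∧ ∑ z, π z * c z = OTCost c pX pY := by
  obtain ⟨π, hπ, hmin⟩ := (isCompact_couplings pX pY).exists_isMinOn
    ⟨_, prod_coupling hpX hpY⟩ (f := fun π => ∑ z, π z * c z) (by fun_prop)
  refine ⟨π, hπ, le_antisymm ?_ (OTCost_le c hc hπ)⟩
  refine le_csInf ⟨_, ⟨_, prod_coupling hpX hpY, rfl⟩⟩ ?_
  rintro r ⟨π', hπ', rfl⟩
  exact hmin hπ'


/-- The feasibility cone for the OT linear program. -/
def OTCone (c : X × Y → ℝ) : Set ((X → ℝ) × (Y → ℝ) × ℝ) :=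
  {w | ∃ β : X × Y → ℝ, ∃ s : ℝ, (∀ z, 0 ≤ β z) ∧ 0 ≤ s ∧
    w = ((fun x => ∑ y, β (x, y)), (fun y => ∑ x, β (x, y)), (∑ z, β z * c z) + s)}

lemma OTCone.smul_mem {c : X × Y → ℝ} {w} (hw : w ∈ OTCone c) {t : ℝ} (ht : 0 ≤ t) :
    t • w ∈ OTCone c := by
  obtain ⟨β, s, hβ, hs, rfl⟩ := hw
  refine ⟨fun z => t * β z, t * s, fun z => mul_nonneg ht (hβ z),
    mul_nonneg ht hs, ?_⟩
  simp only [Prod.smul_mk, smul_eq_mul, Prod.mk.injEq]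
  refine ⟨?_, ?_, ?_⟩
  · funext x; simp [Pi.smul_apply, Finset.mul_sum]
  · funext y; simp [Pi.smul_apply, Finset.mul_sum]
  · simp [Finset.mul_sum, mul_add, mul_assoc]

lemma OTCone.add_mem {c : X × Y → ℝ} {w w'} (hw : w ∈ OTCone c) (hw' : w' ∈ OTCone c) :
    w + w' ∈ OTCone c := by
  obtain ⟨β, s, hβ, hs, rfl⟩ := hw
  obtain ⟨β', s', hβ', hs', rfl⟩ := hw'
  refine ⟨fun z => β z + β' z, s + s', fun z => add_nonneg (hβ z) (hβ' z),
    add_nonneg hs hs', ?_⟩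
  simp only [Prod.mk_add_mk, Prod.mk.injEq]
  refine ⟨?_, ?_, ?_⟩
  · funext x; simp [Finset.sum_add_distrib]
  · funext y; simp [Finset.sum_add_distrib]
  · simp [add_mul, Finset.sum_add_distrib]; ring

lemma OTCone.convex (c : X × Y → ℝ) : Convex ℝ (OTCone c) := by
  intro x hx y hy a b ha hb _
  exact OTCone.add_mem (OTCone.smul_mem hx ha) (OTCone.smul_mem hy hb)

lemma OTCone.zero_mem (c : X × Y → ℝ) : (0 : (X → ℝ) × (Y → ℝ) × ℝ) ∈ OTCone c := by
  refine ⟨0, 0, fun z => le_refl 0, le_refl 0, ?_⟩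
  simp [Prod.ext_iff]
  exact ⟨funext fun x => rfl, funext fun y => rfl⟩

lemma notin_closure_OTCone (c : X × Y → ℝ) (hc : ∀ z, 0 ≤ c z)
    {pX : X → ℝ} {pY : Y → ℝ} (hpX : IsPMF pX) (hpY : IsPMF pY)
    {ε : ℝ} (hε : 0 < ε) :
    (pX, pY, OTCost c pX pY - ε) ∉ closure (OTCone c) := by
  intro hmem
  rw [mem_closure_iff_seq_limit] at hmem
  obtain ⟨w, hwC, hwlim⟩ := hmem
  choose β s hβ hs hw using hwC
  set α := OTCost c pX pY with hα
  -- componentwise limits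
  have h1 : Filter.Tendsto (fun n => (w n).1) Filter.atTop (nhds pX) :=
    (continuous_fst.tendsto _).comp hwlim
  have h2 : Filter.Tendsto (fun n => (w n).2.1) Filter.atTop (nhds pY) :=
    ((continuous_fst.tendsto _).comp ((continuous_snd.tendsto _).comp hwlim))
  have h3 : Filter.Tendsto (fun n => (w n).2.2) Filter.atTop (nhds (α - ε)) :=
    ((continuous_snd.tendsto _).comp ((continuous_snd.tendsto _).comp hwlim))
  have h1x : ∀ x, Filter.Tendsto (fun n => ∑ y, β n (x, y)) Filter.atTop (nhds (pX x)) := by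
    intro x
    have := ((continuous_apply x).tendsto pX).comp h1
    simpa only [Function.comp_def, hw] using this
  have h2y : ∀ y, Filter.Tendsto (fun n => ∑ x, β n (x, y)) Filter.atTop (nhds (pY y)) := by
    intro y
    have := ((continuous_apply y).tendsto pY).comp h2
    simpa only [Function.comp_def, hw] using this
  -- the total mass tends to 1
  have hT : Filter.Tendsto (fun n => ∑ z, β n z) Filter.atTop (nhds 1) := by
    have : Filter.Tendsto (fun n => ∑ x, ∑ y, β n (x, y)) Filter.atTop (nhds (∑ x, pX x)) :=
      tendsto_finset_sum _ (fun x _ => h1x x)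
    rw [hpX.2] at this
    convert this using 2 with n
    exact Fintype.sum_prod_type _
  have hev : ∀ᶠ n in Filter.atTop, ∑ z, β n z < 2 :=
    hT.eventually_lt_const one_lt_two
  obtain ⟨N, hN⟩ := Filter.eventually_atTop.mp hev
  -- extract convergent subsequence from the box
  have hbox : ∀ k : ℕ, β (N + k) ∈ Set.univ.pi (fun _ : X × Y => Set.Icc (0:ℝ) 2) := by
    intro k
    simp only [Set.mem_pi, Set.mem_univ, forall_true_left, Set.mem_Icc]
    intro z
    refine ⟨hβ _ z, ?_⟩
    calc β (N + k) z ≤ ∑ u, β (N + k) u :=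
          Finset.single_le_sum (fun u _ => hβ _ u) (Finset.mem_univ z)
    _ ≤ 2 := le_of_lt (hN _ (Nat.le_add_right N k))
  obtain ⟨βl, hβl, σ, hσ, hconv⟩ :=
    (isCompact_univ_pi (fun _ : X × Y => isCompact_Icc)).tendsto_subseq hbox
  set m : ℕ → ℕ := fun k => N + σ k with hm
  have hmmono : StrictMono m := fun a b hab => Nat.add_lt_add_left (hσ hab) N
  have hmtop : Filter.Tendsto m Filter.atTop Filter.atTop := hmmono.tendsto_atTop
  -- coordinatewise convergence of the subsequence
  have hcoord : ∀ z, Filter.Tendsto (fun k => β (m k) z) Filter.atTop (nhds (βl z)) := by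
    intro z
    exact ((continuous_apply z).tendsto βl).comp hconv
  -- marginals of the limit
  have hmargX : ∀ x, ∑ y, βl (x, y) = pX x := by
    intro x
    have t1 : Filter.Tendsto (fun k => ∑ y, β (m k) (x, y)) Filter.atTop
        (nhds (∑ y, βl (x, y))) := tendsto_finset_sum _ (fun y _ => hcoord (x, y))
    have t2 : Filter.Tendsto (fun k => ∑ y, β (m k) (x, y)) Filter.atTop (nhds (pX x)) :=
      (h1x x).comp hmtop
    exact tendsto_nhds_unique t1 t2
  have hmargY : ∀ y, ∑ x, βl (x, y) = pY y := by
    intro y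
    have t1 : Filter.Tendsto (fun k => ∑ x, β (m k) (x, y)) Filter.atTop
        (nhds (∑ x, βl (x, y))) := tendsto_finset_sum _ (fun x _ => hcoord (x, y))
    have t2 : Filter.Tendsto (fun k => ∑ x, β (m k) (x, y)) Filter.atTop (nhds (pY y)) :=
      (h2y y).comp hmtop
    exact tendsto_nhds_unique t1 t2
  have hβlnn : ∀ z, 0 ≤ βl z := by
    intro z
    have := hβl
    simp only [Set.mem_pi, Set.mem_univ, forall_true_left, Set.mem_Icc] at this
    exact (this z).1
  have hcoupl : IsCoupling pX pY βl := by
    refine ⟨⟨hβlnn, ?_⟩, hmargX, hmargY⟩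
    rw [Fintype.sum_prod_type]
    simp only [hmargX]
    exact hpX.2
  -- cost convergence
  have hcost : Filter.Tendsto (fun k => ∑ z, β (m k) z * c z) Filter.atTop
      (nhds (∑ z, βl z * c z)) :=
    tendsto_finset_sum _ (fun z _ => (hcoord z).mul tendsto_const_nhds)
  -- the slack converges
  have h3m : Filter.Tendsto (fun k => (∑ z, β (m k) z * c z) + s (m k)) Filter.atTop
      (nhds (α - ε)) := by
    have := h3.comp hmtop
    simpa only [Function.comp_def, hw] using this
  have hslack : Filter.Tendsto (fun k => s (m k)) Filter.atTop
      (nhds ((α - ε) - ∑ z, βl z * c z)) := by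
    have := h3m.sub hcost
    simpa using this
  have hsinf : (0:ℝ) ≤ (α - ε) - ∑ z, βl z * c z :=
    ge_of_tendsto' hslack (fun k => hs (m k))
  have : α ≤ ∑ z, βl z * c z := OTCost_le c hc hcoupl
  linarith


open Classical in
lemma clm_pi {Z : Type*} [Fintype Z] (g : (Z → ℝ) →L[ℝ] ℝ) (v : Z → ℝ) :
    g v = ∑ x, v x * g (fun j => if x = j then 1 else 0) := by
  conv_lhs => rw [pi_eq_sum_univ v]
  rw [map_sum]
  exact Finset.sum_congr rfl fun x _ => by rw [map_smul]; simp

open Classical in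
/-- Expansion of a continuous linear functional on the product space. -/
lemma clm_expand {X Y : Type*} [Fintype X] [Fintype Y]
    (f : ((X → ℝ) × (Y → ℝ) × ℝ) →L[ℝ] ℝ) (w : (X → ℝ) × (Y → ℝ) × ℝ) :
    f w = (∑ x, w.1 x * f ((fun j => if x = j then 1 else 0), 0, 0))
        + (∑ y, w.2.1 y * f (0, (fun j => if y = j then 1 else 0), 0))
        + w.2.2 * f (0, 0, 1) := by
  have hdec : w = (w.1, 0, 0) + (0, w.2.1, 0) + (0, 0, w.2.2) := by
    simp [Prod.ext_iff]
  set gX : (X → ℝ) →L[ℝ] ℝ :=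
    f.comp (ContinuousLinearMap.inl ℝ (X → ℝ) ((Y → ℝ) × ℝ)) with hgX
  set gY : (Y → ℝ) →L[ℝ] ℝ :=
    f.comp ((ContinuousLinearMap.inr ℝ (X → ℝ) ((Y → ℝ) × ℝ)).comp
      (ContinuousLinearMap.inl ℝ (Y → ℝ) ℝ)) with hgY
  have e1 : f (w.1, 0, 0) = ∑ x, w.1 x * f ((fun j => if x = j then 1 else 0), 0, 0) := by
    have : f (w.1, 0, 0) = gX w.1 := by simp [hgX]; rfl
    rw [this, clm_pi gX w.1]
    exact Finset.sum_congr rfl fun x _ => by simp [hgX]; exact Or.inl rfl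
  have e2 : f (0, w.2.1, 0) = ∑ y, w.2.1 y * f (0, (fun j => if y = j then 1 else 0), 0) := by
    have : f (0, w.2.1, 0) = gY w.2.1 := by simp [hgY]
    rw [this, clm_pi gY w.2.1]
    exact Finset.sum_congr rfl fun y _ => by simp [hgY]
  have e3 : f (0, 0, w.2.2) = w.2.2 * f (0, 0, 1) := by
    have : ((0 : X → ℝ), (0 : Y → ℝ), w.2.2) = w.2.2 • ((0 : X → ℝ), (0 : Y → ℝ), (1:ℝ)) := by
      simp [Prod.ext_iff, Prod.smul_def]
    rw [this, map_smul]
    simp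
  conv_lhs => rw [hdec]
  rw [map_add, map_add, e1, e2, e3]

open Classical in
lemma exists_near_dual (c : X × Y → ℝ) (hc : ∀ z, 0 ≤ c z)
    {pX : X → ℝ} {pY : Y → ℝ} (hpX : IsPMF pX) (hpY : IsPMF pY)
    {ε : ℝ} (hε : 0 < ε) :
    ∃ (φ : X → ℝ) (ψ : Y → ℝ), (∀ x y, φ x + ψ y ≤ c (x, y)) ∧
      OTCost c pX pY - ε < ∑ x, pX x * φ x + ∑ y, pY y * ψ y := by
  obtain ⟨f, u, hfu, hub⟩ := geometric_hahn_banach_closed_point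
    ((OTCone.convex c).closure) isClosed_closure (notin_closure_OTCone c hc hpX hpY hε)
  -- u is positive
  have hu : 0 < u := by
    have := hfu 0 (subset_closure (OTCone.zero_mem c))
    simpa using this
  -- f is nonpositive on the cone
  have hfnonpos : ∀ w ∈ OTCone c, f w ≤ 0 := by
    intro w hw
    by_contra hpos
    push_neg at hpos
    have ht : (0:ℝ) ≤ u / f w := le_of_lt (div_pos hu hpos)
    have hmem : (u / f w) • w ∈ OTCone c := OTCone.smul_mem hw ht
    have := hfu _ (subset_closure hmem)
    rw [map_smul] at this
    simp only [smul_eq_mul] at this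
    rw [div_mul_cancel₀ u (ne_of_gt hpos)] at this
    exact lt_irrefl u this
  -- components of f
  set φ0 : X → ℝ := fun x => f ((fun j => if x = j then 1 else 0), 0, 0) with hφ0
  set ψ0 : Y → ℝ := fun y => f (0, (fun j => if y = j then 1 else 0), 0) with hψ0
  set γ : ℝ := f (0, 0, 1) with hγ
  -- generators belong to the cone
  have hgen : ∀ z : X × Y,
      ((fun j => if z.1 = j then 1 else 0), (fun j => if z.2 = j then 1 else 0), c z)
        ∈ OTCone c := by
    intro z
    refine ⟨fun w => if w = z then 1 else 0, 0, fun w => by positivity, le_refl 0, ?_⟩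
    have hcost : ∑ w, (if w = z then (1:ℝ) else 0) * c w = c z := by
      rw [Finset.sum_eq_single z]
      · simp
      · intro b _ hb; simp [hb]
      · simp
    rw [Prod.ext_iff, Prod.ext_iff]
    refine ⟨?_, ?_, ?_⟩
    · funext x
      obtain ⟨z1, z2⟩ := z
      by_cases hx : x = z1
      · subst hx
        simp [Prod.ext_iff, Finset.sum_ite_eq']
      · simp [Prod.ext_iff, hx, Ne.symm hx]
    · funext y
      obtain ⟨z1, z2⟩ := z
      by_cases hy : y = z2
      · subst hy
        simp [Prod.ext_iff, Finset.sum_ite_eq']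
      · simp [Prod.ext_iff, hy, Ne.symm hy]
    · simp [hcost]
  -- the inequality on generators
  have hgz : ∀ z : X × Y, φ0 z.1 + ψ0 z.2 + c z * γ ≤ 0 := by
    intro z
    have hle := hfnonpos _ (hgen z)
    rw [clm_expand] at hle
    simpa [ite_mul, Finset.sum_ite_eq, hφ0, hψ0, hγ] using hle
  -- the value inequality
  have hval : u < ∑ x, pX x * φ0 x + ∑ y, pY y * ψ0 y + (OTCost c pX pY - ε) * γ := by
    have := hub
    rwa [clm_expand] at this
  -- optimal coupling
  obtain ⟨π, hπ, hπopt⟩ := exists_optimal_coupling c hc hpX hpY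
  have hweak : ∑ x, pX x * φ0 x + ∑ y, pY y * ψ0 y ≤ (-γ) * OTCost c pX pY := by
    have h1 : ∑ x, pX x * φ0 x + ∑ y, pY y * ψ0 y
        = ∑ z : X × Y, π z * (φ0 z.1 + ψ0 z.2) := by
      rw [← sum_fst hπ φ0, ← sum_snd hπ ψ0, ← Finset.sum_add_distrib]
      exact Finset.sum_congr rfl fun z _ => by ring
    have h2 : ∑ z : X × Y, π z * (φ0 z.1 + ψ0 z.2) ≤ ∑ z : X × Y, π z * ((-γ) * c z) := by
      apply Finset.sum_le_sum
      intro z _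
      apply mul_le_mul_of_nonneg_left _ (hπ.1.1 z)
      have := hgz z
      nlinarith [hgz z]
    have h3 : ∑ z : X × Y, π z * ((-γ) * c z) = (-γ) * OTCost c pX pY := by
      rw [← hπopt, Finset.mul_sum]
      exact Finset.sum_congr rfl fun z _ => by ring
    rw [h1]
    exact h2.trans_eq h3
  -- γ is negative
  have hγneg : γ < 0 := by nlinarith
  -- build the dual pair
  refine ⟨fun x => φ0 x / (-γ), fun y => ψ0 y / (-γ), ?_, ?_⟩
  · intro x y
    have hγpos : (0:ℝ) < -γ := by linarith
    rw [div_add_div _ _ (ne_of_gt hγpos) (ne_of_gt hγpos),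
      div_le_iff₀ (by positivity : (0:ℝ) < -γ * -γ)]
    nlinarith [hgz (x, y)]
  · have hrw : ∑ x, pX x * (φ0 x / (-γ)) + ∑ y, pY y * (ψ0 y / (-γ))
        = (∑ x, pX x * φ0 x + ∑ y, pY y * ψ0 y) / (-γ) := by
      rw [add_div, Finset.sum_div, Finset.sum_div]
      congr 1 <;> exact Finset.sum_congr rfl fun _ _ => by ring
    rw [hrw, lt_div_iff₀ (by linarith)]
    nlinarith


/-- Weak duality. -/
lemma weak_duality (c : X × Y → ℝ) {pX : X → ℝ} {pY : Y → ℝ}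
    {π : X × Y → ℝ} (hπ : IsCoupling pX pY π)
    {φ : X → ℝ} {ψ : Y → ℝ} (hfeas : ∀ x y, φ x + ψ y ≤ c (x, y)) :
    ∑ x, pX x * φ x + ∑ y, pY y * ψ y ≤ ∑ z, π z * c z := by
  have h1 : ∑ x, pX x * φ x + ∑ y, pY y * ψ y
      = ∑ z : X × Y, π z * (φ z.1 + ψ z.2) := by
    rw [← sum_fst hπ φ, ← sum_snd hπ ψ, ← Finset.sum_add_distrib]
    exact Finset.sum_congr rfl fun z _ => by ring
  rw [h1]
  exact Finset.sum_le_sum fun z _ =>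
    mul_le_mul_of_nonneg_left (hfeas z.1 z.2) (hπ.1.1 z)

/-- Existence of an optimal dual pair. -/
lemma exists_optimal_dual (c : X × Y → ℝ) (hc : ∀ z, 0 ≤ c z)
    {pX : X → ℝ} {pY : Y → ℝ} (hpX : IsPMF pX) (hpY : IsPMF pY) :
    ∃ (φ : X → ℝ) (ψ : Y → ℝ), (∀ x y, φ x + ψ y ≤ c (x, y)) ∧
      ∑ x, pX x * φ x + ∑ y, pY y * ψ y = OTCost c pX pY := by
  have hX : Nonempty X := hpX.nonempty
  have hY : Nonempty Y := hpY.nonempty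
  set α := OTCost c pX pY with hα
  -- the sup of the cost
  obtain ⟨z0⟩ : Nonempty (X × Y) := ⟨⟨hX.some, hY.some⟩⟩
  set M : ℝ := Finset.univ.sup' ⟨z0, Finset.mem_univ z0⟩ c with hM
  have hMle : ∀ z, c z ≤ M := fun z => Finset.le_sup' c (Finset.mem_univ z)
  have hM0 : 0 ≤ M := le_trans (hc z0) (hMle z0)
  -- the compact feasible region
  set D : Set ((X → ℝ) × (Y → ℝ)) :=
    {p | (∀ x y, p.1 x + p.2 y ≤ c (x, y)) ∧
      (∀ x, p.1 x ∈ Set.Icc (-M) 0) ∧ (∀ y, p.2 y ∈ Set.Icc (α - 1 - M) (2*M))} with hD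
  -- normalization: every near-optimal dual pair can be brought into D
  have hnorm : ∀ ε : ℝ, 0 < ε → ε ≤ 1 →
      ∃ p ∈ D, α - ε < ∑ x, pX x * p.1 x + ∑ y, pY y * p.2 y := by
    intro ε hε hε1
    obtain ⟨φ, ψ, hfeas, hval⟩ := exists_near_dual c hc hpX hpY hε
    set ψ1 : Y → ℝ := fun y => Finset.univ.inf' Finset.univ_nonempty (fun x => c (x, y) - φ x)
      with hψ1
    set φ1 : X → ℝ := fun x => Finset.univ.inf' Finset.univ_nonempty (fun y => c (x, y) - ψ1 y)
      with hφ1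
    set t : ℝ := Finset.univ.sup' Finset.univ_nonempty φ1 with ht
    set φ2 : X → ℝ := fun x => φ1 x - t with hφ2
    set ψ2 : Y → ℝ := fun y => ψ1 y + t with hψ2
    -- ψ ≤ ψ1
    have hψψ1 : ∀ y, ψ y ≤ ψ1 y := by
      intro y
      apply Finset.le_inf'
      intro x _
      linarith [hfeas x y]
    -- φ ≤ φ1
    have hφφ1 : ∀ x, φ x ≤ φ1 x := by
      intro x
      apply Finset.le_inf'
      intro y _
      have : ψ1 y ≤ c (x, y) - φ x := Finset.inf'_le _ (Finset.mem_univ x)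
      linarith
    -- feasibility of (φ1, ψ1), hence of (φ2, ψ2)
    have hfeas1 : ∀ x y, φ1 x + ψ1 y ≤ c (x, y) := by
      intro x y
      have : φ1 x ≤ c (x, y) - ψ1 y := Finset.inf'_le _ (Finset.mem_univ y)
      linarith
    have hfeas2 : ∀ x y, φ2 x + ψ2 y ≤ c (x, y) := by
      intro x y
      have := hfeas1 x y
      simp only [hφ2, hψ2]
      linarith
    -- oscillation bounds
    have hoscφ1 : ∀ x x', φ1 x' - M ≤ φ1 x := by
      intro x x'
      apply Finset.le_inf'
      intro y _
      have h1 : φ1 x' ≤ c (x', y) - ψ1 y := Finset.inf'_le _ (Finset.mem_univ y)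
      have h2 : c (x', y) ≤ M := hMle _
      have h3 : 0 ≤ c (x, y) := hc _
      linarith
    have hoscψ1 : ∀ y y', ψ1 y' - M ≤ ψ1 y := by
      intro y y'
      apply Finset.le_inf'
      intro x _
      have h1 : ψ1 y' ≤ c (x, y') - φ x := Finset.inf'_le _ (Finset.mem_univ x)
      have h2 : c (x, y') ≤ M := hMle _
      have h3 : 0 ≤ c (x, y) := hc _
      linarith
    -- φ2 ∈ [-M, 0]
    have hφ2ub : ∀ x, φ2 x ≤ 0 := by
      intro x
      have : φ1 x ≤ t := Finset.le_sup' _ (Finset.mem_univ x)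
      simp only [hφ2]; linarith
    have hφ2lb : ∀ x, -M ≤ φ2 x := by
      intro x
      obtain ⟨x', _, hx'⟩ := Finset.exists_mem_eq_sup' Finset.univ_nonempty φ1
      have h := hoscφ1 x x'
      have ht' : t = φ1 x' := hx'
      simp only [hφ2]
      linarith
    -- value of (φ2, ψ2)
    have hval2 : α - ε < ∑ x, pX x * φ2 x + ∑ y, pY y * ψ2 y := by
      have e1 : ∑ x, pX x * φ2 x = ∑ x, pX x * φ1 x - t * ∑ x, pX x := by
        rw [Finset.mul_sum, ← Finset.sum_sub_distrib]
        exact Finset.sum_congr rfl fun x _ => by simp [hφ2]; ring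
      have e2 : ∑ y, pY y * ψ2 y = ∑ y, pY y * ψ1 y + t * ∑ y, pY y := by
        rw [Finset.mul_sum, ← Finset.sum_add_distrib]
        exact Finset.sum_congr rfl fun y _ => by simp [hψ2]; ring
      have mono1 : ∑ x, pX x * φ x ≤ ∑ x, pX x * φ1 x :=
        Finset.sum_le_sum fun x _ => mul_le_mul_of_nonneg_left (hφφ1 x) (hpX.1 x)
      have mono2 : ∑ y, pY y * ψ y ≤ ∑ y, pY y * ψ1 y :=
        Finset.sum_le_sum fun y _ => mul_le_mul_of_nonneg_left (hψψ1 y) (hpY.1 y)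
      rw [e1, e2, hpX.2, hpY.2]
      linarith
    -- ψ2 bounds
    have hψ2ub : ∀ y, ψ2 y ≤ 2*M := by
      intro y
      have := hfeas2 hX.some y
      have h1 : -M ≤ φ2 hX.some := hφ2lb _
      have h2 : c (hX.some, y) ≤ M := hMle _
      linarith
    have hψ2lb : ∀ y, α - 1 - M ≤ ψ2 y := by
      intro y
      -- the weighted average of ψ2 exceeds α - 1
      have havg : α - 1 < ∑ y, pY y * ψ2 y := by
        have h0 : ∑ x, pX x * φ2 x ≤ 0 :=
          Finset.sum_nonpos fun x _ => mul_nonpos_of_nonneg_of_nonpos (hpX.1 x) (hφ2ub x)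
        linarith [hval2]
      -- so some coordinate exceeds α - 1
      have hsup : ∃ y', α - 1 < ψ2 y' := by
        by_contra hcon
        push_neg at hcon
        have : ∑ y, pY y * ψ2 y ≤ ∑ y, pY y * (α - 1) :=
          Finset.sum_le_sum fun y _ => mul_le_mul_of_nonneg_left (hcon y) (hpY.1 y)
        rw [← Finset.sum_mul, hpY.2, one_mul] at this
        linarith
      obtain ⟨y', hy'⟩ := hsup
      have : ψ2 y' - M ≤ ψ2 y := by
        simp only [hψ2]
        linarith [hoscψ1 y y']
      linarith
    exact ⟨(φ2, ψ2), ⟨hfeas2, fun x => ⟨hφ2lb x, hφ2ub x⟩,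
      fun y => ⟨hψ2lb y, hψ2ub y⟩⟩, hval2⟩
  -- D is compact
  have hDcompact : IsCompact D := by
    apply IsCompact.of_isClosed_subset
      ((isCompact_univ_pi (fun _ : X => isCompact_Icc (a := -M) (b := 0))).prod
        (isCompact_univ_pi (fun _ : Y => isCompact_Icc (a := α - 1 - M) (b := 2*M))))
    · have c1 : IsClosed {p : (X → ℝ) × (Y → ℝ) | ∀ x y, p.1 x + p.2 y ≤ c (x, y)} := by
        rw [Set.setOf_forall]
        refine isClosed_iInter fun x => ?_
        rw [Set.setOf_forall]
        refine isClosed_iInter fun y => isClosed_le ?_ continuous_const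
        exact ((continuous_apply x).comp continuous_fst).add
          ((continuous_apply y).comp continuous_snd)
      have c2 : IsClosed {p : (X → ℝ) × (Y → ℝ) | ∀ x, p.1 x ∈ Set.Icc (-M) 0} := by
        rw [Set.setOf_forall]
        refine isClosed_iInter fun x => ?_
        exact IsClosed.preimage ((continuous_apply x).comp continuous_fst) isClosed_Icc
      have c3 : IsClosed {p : (X → ℝ) × (Y → ℝ) | ∀ y, p.2 y ∈ Set.Icc (α - 1 - M) (2*M)} := by
        rw [Set.setOf_forall]
        refine isClosed_iInter fun y => ?_
        exact IsClosed.preimage ((continuous_apply y).comp continuous_snd) isClosed_Icc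
      have : D = {p : (X → ℝ) × (Y → ℝ) | ∀ x y, p.1 x + p.2 y ≤ c (x, y)} ∩
          ({p | ∀ x, p.1 x ∈ Set.Icc (-M) 0} ∩ {p | ∀ y, p.2 y ∈ Set.Icc (α - 1 - M) (2*M)}) := by
        ext p
        simp only [hD, Set.mem_setOf_eq, Set.mem_inter_iff]
      rw [this]
      exact c1.inter (c2.inter c3)
    · rintro p ⟨-, h2, h3⟩
      constructor
      · simp only [Set.mem_pi, Set.mem_univ, forall_true_left]
        exact fun x => h2 x
      · simp only [Set.mem_pi, Set.mem_univ, forall_true_left]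
        exact fun y => h3 y
  -- maximize the value over D
  have hDne : D.Nonempty := by
    obtain ⟨p, hp, -⟩ := hnorm 1 one_pos le_rfl
    exact ⟨p, hp⟩
  obtain ⟨p, hpD, hpmax⟩ := hDcompact.exists_isMaxOn hDne
    (f := fun p => ∑ x, pX x * p.1 x + ∑ y, pY y * p.2 y) (by fun_prop)
  refine ⟨p.1, p.2, hpD.1, le_antisymm ?_ ?_⟩
  · obtain ⟨π, hπ, hπopt⟩ := exists_optimal_coupling c hc hpX hpY
    calc ∑ x, pX x * p.1 x + ∑ y, pY y * p.2 y ≤ ∑ z, π z * c z :=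
          weak_duality c hπ hpD.1
    _ = α := hπopt
  · by_contra hcon
    push_neg at hcon
    set v := ∑ x, pX x * p.1 x + ∑ y, pY y * p.2 y with hv
    have hεpos : 0 < min 1 (α - v) := lt_min one_pos (by linarith)
    obtain ⟨q, hqD, hqval⟩ := hnorm _ hεpos (min_le_left _ _)
    have hle : ∑ x, pX x * q.1 x + ∑ y, pY y * q.2 y ≤ v := hpmax hqD
    have : α - (α - v) ≤ α - min 1 (α - v) := by
      have := min_le_right 1 (α - v)
      linarith
    linarith

/-- marginal swaps for signed couplings -/
lemma sum_fst' {pX : X → ℝ} {π : X × Y → ℝ}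
    (h : ∀ x, ∑ y, π (x, y) = pX x) (φ : X → ℝ) :
    ∑ z : X × Y, π z * φ z.1 = ∑ x, pX x * φ x := by
  rw [Fintype.sum_prod_type]
  exact Finset.sum_congr rfl fun x _ => by rw [← h x, Finset.sum_mul]
lemma sum_snd' {pY : Y → ℝ} {π : X × Y → ℝ}
    (h : ∀ y, ∑ x, π (x, y) = pY y) (ψ : Y → ℝ) :
    ∑ z : X × Y, π z * ψ z.2 = ∑ y, pY y * ψ y := by
  rw [Fintype.sum_prod_type_right]
  exact Finset.sum_congr rfl fun y _ => by rw [← h y, Finset.sum_mul]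


end Aux2
end Aux

/-- with `α = E(P_X, P_Y)`, `S` the union of supports of optimal couplings
of `(P_X, P_Y)` and `θ` defined via signed couplings with negative part supported on `S`,
for any pmfs `(Q_X, Q_Y)` and any `a > 0`, setting `β_X = (Q_X − P_X)/a`,
`β_Y = (Q_Y − P_Y)/a`, one has `(E(Q_X,Q_Y) − α)/a ≥ θ(β_X, β_Y)`. -/
theorem stmt11 {X Y : Type*} [Fintype X] [Fintype Y]
    (c : X × Y → ℝ) (hc : ∀ z, 0 ≤ c z)
    (pX : X → ℝ) (pY : Y → ℝ) (hpX : IsPMF pX) (hpY : IsPMF pY)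
    (S : Set (X × Y))
    (hS : S = {z | ∃ π, IsCoupling pX pY π ∧ (∑ w, π w * c w) = OTCost c pX pY ∧ π z ≠ 0})
    (θ : (X → ℝ) → (Y → ℝ) → ℝ)
    (hθ : ∀ βX βY, θ βX βY = sInf {r | ∃ β : X × Y → ℝ,
        (∀ x, ∑ y, β (x, y) = βX x) ∧ (∀ y, ∑ x, β (x, y) = βY y) ∧
        (∀ z, β z < 0 → z ∈ S) ∧ r = ∑ z, β z * c z})
    (qX : X → ℝ) (qY : Y → ℝ) (hqX : IsPMF qX) (hqY : IsPMF qY)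
    (a : ℝ) (ha : 0 < a) :
    θ (fun x => (qX x - pX x) / a) (fun y => (qY y - pY y) / a)
      ≤ (OTCost c qX qY - OTCost c pX pY) / a := by
  set α := OTCost c pX pY with hα
  set βX : X → ℝ := fun x => (qX x - pX x) / a with hβX
  set βY : Y → ℝ := fun y => (qY y - pY y) / a with hβY
  -- the optimal dual pair, tight on S
  obtain ⟨φ, ψ, hfeas, hdual⟩ := exists_optimal_dual c hc hpX hpY
  have htight : ∀ z ∈ S, φ z.1 + ψ z.2 = c z := by
    intro z hz
    rw [hS] at hz
    obtain ⟨π, hπ, hπopt, hπz⟩ := hz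
    have hsum : ∑ w : X × Y, π w * (c w - (φ w.1 + ψ w.2)) = 0 := by
      have e : ∑ w : X × Y, π w * (c w - (φ w.1 + ψ w.2))
          = ∑ w, π w * c w - (∑ w : X × Y, π w * φ w.1 + ∑ w : X × Y, π w * ψ w.2) := by
        rw [← Finset.sum_add_distrib, ← Finset.sum_sub_distrib]
        exact Finset.sum_congr rfl fun w _ => by ring
      rw [e, sum_fst' hπ.2.1 φ, sum_snd' hπ.2.2 ψ, hπopt, hdual]
      ring
    have hterm : ∀ w ∈ Finset.univ (α := X × Y), 0 ≤ π w * (c w - (φ w.1 + ψ w.2)) :=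
      fun w _ => mul_nonneg (hπ.1.1 w) (by linarith [hfeas w.1 w.2])
    have hz0 := (Finset.sum_eq_zero_iff_of_nonneg hterm).mp hsum z (Finset.mem_univ z)
    rcases mul_eq_zero.mp hz0 with h | h
    · exact absurd h hπz
    · linarith
  -- the θ feasible set is bounded below
  set Θ : Set ℝ := {r | ∃ β : X × Y → ℝ,
      (∀ x, ∑ y, β (x, y) = βX x) ∧ (∀ y, ∑ x, β (x, y) = βY y) ∧
      (∀ z, β z < 0 → z ∈ S) ∧ r = ∑ z, β z * c z} with hΘ
  have hbdd : BddBelow Θ := by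
    refine ⟨∑ x, βX x * φ x + ∑ y, βY y * ψ y, ?_⟩
    rintro r ⟨β, hbx, hby, hneg, rfl⟩
    have key : ∑ z : X × Y, β z * (φ z.1 + ψ z.2) ≤ ∑ z, β z * c z := by
      apply Finset.sum_le_sum
      intro z _
      rcases lt_or_ge (β z) 0 with h | h
      · rw [htight z (hneg z h)]
      · exact mul_le_mul_of_nonneg_left (hfeas z.1 z.2) h
    have e : ∑ z : X × Y, β z * (φ z.1 + ψ z.2) = ∑ x, βX x * φ x + ∑ y, βY y * ψ y := by
      rw [← sum_fst' hbx φ, ← sum_snd' hby ψ, ← Finset.sum_add_distrib]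
      exact Finset.sum_congr rfl fun z _ => by ring
    rw [← e]
    exact key
  -- the optimal coupling for (pX, pY)
  obtain ⟨π₀, hπ₀, hπ₀opt⟩ := exists_optimal_coupling c hc hpX hpY
  have hπ₀S : ∀ z, π₀ z ≠ 0 → z ∈ S := by
    intro z hz
    rw [hS]
    exact ⟨π₀, hπ₀, hπ₀opt, hz⟩
  -- for every coupling of (qX, qY) we get an element of Θ
  have hmem : ∀ πq : X × Y → ℝ, IsCoupling qX qY πq →
      ((∑ z, πq z * c z) - α) / a ∈ Θ := by
    intro πq hπq
    refine ⟨fun z => (πq z - π₀ z) / a, ?_, ?_, ?_, ?_⟩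
    · intro x
      rw [← Finset.sum_div]
      rw [hβX]
      congr 1
      rw [Finset.sum_sub_distrib, hπq.2.1 x, hπ₀.2.1 x]
    · intro y
      rw [← Finset.sum_div]
      rw [hβY]
      congr 1
      rw [Finset.sum_sub_distrib, hπq.2.2 y, hπ₀.2.2 y]
    · intro z hz
      apply hπ₀S
      have h1 : πq z - π₀ z < 0 := by
        by_contra hcon
        push_neg at hcon
        exact absurd hz (not_lt.mpr (div_nonneg hcon (le_of_lt ha)))
      have h2 : 0 ≤ πq z := hπq.1.1 z
      intro h0
      rw [h0] at h1
      linarith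
    · rw [hα, ← hπ₀opt, ← Finset.sum_sub_distrib, Finset.sum_div]
      exact Finset.sum_congr rfl fun z _ => by ring
  -- conclude
  rw [hθ]
  have hQne : {r | ∃ π, IsCoupling qX qY π ∧ r = ∑ z, π z * c z}.Nonempty :=
    ⟨_, _, prod_coupling hqX hqY, rfl⟩
  have hstep : ∀ r ∈ {r | ∃ π, IsCoupling qX qY π ∧ r = ∑ z, π z * c z},
      a * sInf Θ + α ≤ r := by
    rintro r ⟨πq, hπq, rfl⟩
    have := csInf_le hbdd (hmem πq hπq)
    have h2 : a * sInf Θ ≤ (∑ z, πq z * c z) - α := by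
      rw [mul_comm]
      calc sInf Θ * a ≤ (((∑ z, πq z * c z) - α) / a) * a :=
            mul_le_mul_of_nonneg_right this (le_of_lt ha)
      _ = (∑ z, πq z * c z) - α := div_mul_cancel₀ _ (ne_of_gt ha)
    linarith
  have hfin : a * sInf Θ + α ≤ OTCost c qX qY := le_csInf hQne hstep
  rw [le_div_iff₀ ha]
  linarith
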